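/- Let a, b be real numbers with 0 < a < b and let q ≥ 1. Then |L(a,b)^(−1) − A(a,b)^(−1)| ≤ ((b−a)²/24) · ( ((3·a^(−3q) + 5·b^(−3q))/8)^(1/q) + ((5·a^(−3q) + 3·b^(−3q))/8)^(1/q) ), i.e. |(ln b − ln a)/(b−a) − 2/(a+b)| ≤ ((b−a)²/24) · ( ((3·a^(−3q) + 5·b^(−3q))/8)^(1/q) + ((5·a^(−3q) + 3·b^(−3q))/8)^(1/q) ). -/

import Mathlib

open Real Set

/-- Midpoint (lower) bound: `2(b-a)/(a+b) ≤ log b - log a`. -/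
lemma stmt_12_log_lower (a b : ℝ) (ha : 0 < a) (hab : a ≤ b) :
    2 * (b - a) / (a + b) ≤ Real.log b - Real.log a := by
  set f : ℝ → ℝ := fun x => Real.log x - 2 * (x - a) / (a + x) with hf
  have key : MonotoneOn f (Ici a) := by
    have hderiv : ∀ x ∈ interior (Ici a), 0 ≤ deriv f x := by
      intro x hx
      rw [interior_Ici] at hx
      have hxa : a < x := hx
      have hx0 : 0 < x := ha.trans hxa
      have hax : 0 < a + x := by linarith
      have hd : HasDerivAt f ((x - a)^2 / (x * (a + x)^2)) x := by
        have h1 : HasDerivAt (fun x : ℝ => Real.log x) (1/x) x := by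
          simpa using Real.hasDerivAt_log hx0.ne'
        have h2 : HasDerivAt (fun x : ℝ => 2 * (x - a) / (a + x))
            ((2 * (a + x) - 2 * (x - a)) / (a + x)^2) x := by
          have hn : HasDerivAt (fun x : ℝ => 2 * (x - a)) 2 x := by
            simpa using ((hasDerivAt_id x).sub_const a).const_mul 2
          have hdn : HasDerivAt (fun x : ℝ => a + x) 1 x := by
            simpa using (hasDerivAt_id x).const_add a
          exact (hn.div hdn hax.ne').congr_deriv (by ring)
        have := h1.sub h2
        refine this.congr_deriv ?_
        field_simp
        ring
      rw [hd.deriv]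
      positivity
    apply monotoneOn_of_deriv_nonneg (convex_Ici a) _ _ hderiv
    · apply ContinuousOn.sub
      · exact fun x hx => (Real.continuousAt_log
          (by have h1 : a ≤ x := hx
              have : (0:ℝ) < x := lt_of_lt_of_le ha h1
              exact this.ne')).continuousWithinAt
      · apply ContinuousOn.div
        · fun_prop
        · fun_prop
        · intro x hx
          have h1 : a ≤ x := hx
          have : (0:ℝ) < a + x := by linarith
          exact this.ne'
    · intro x hx
      rw [interior_Ici] at hx
      have hxa : a < x := hx
      have hx0 : 0 < x := ha.trans hxa
      have hax : (a + x) ≠ 0 := by positivity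
      apply DifferentiableAt.differentiableWithinAt
      apply DifferentiableAt.sub
      · exact Real.differentiableAt_log hx0.ne'
      · exact (differentiable_id.sub_const a |>.const_mul 2 |>.differentiableAt).div
          ((differentiable_id.const_add a).differentiableAt) hax
  have h := key (self_mem_Ici) (mem_Ici.mpr hab) hab
  simp only [hf] at h
  have ha0 : Real.log a - 2 * (a - a) / (a + a) = Real.log a := by simp
  rw [ha0] at h
  linarith

/-- Upper bound: trapezoid-type refinement of the midpoint inequality. -/
lemma stmt_12_log_upper (a b : ℝ) (ha : 0 < a) (hab : a ≤ b) :
    Real.log b - Real.log a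
      ≤ 2 * (b - a) / (a + b) + (b - a)^3 * (a^3 + b^3) / (24 * a^3 * b^3) := by
  set f : ℝ → ℝ := fun x =>
    2 * (x - a) / (a + x) + (x - a)^3 * (a^3 + x^3) / (24 * a^3 * x^3) - Real.log x with hf
  have key : MonotoneOn f (Ici a) := by
    have hderiv : ∀ x ∈ interior (Ici a), 0 ≤ deriv f x := by
      intro x hx
      rw [interior_Ici] at hx
      have hxa : a < x := hx
      have hx0 : 0 < x := ha.trans hxa
      have hax : 0 < a + x := by linarith
      have hd : HasDerivAt f
          (((x - a)^2 * ((x^4 + a^4) * x * (a + x)^2 - 8 * a^3 * x^4))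
            / (8 * a^3 * x^5 * (a + x)^2)) x := by
        have h1 : HasDerivAt (fun x : ℝ => Real.log x) (1/x) x := by
          simpa using Real.hasDerivAt_log hx0.ne'
        have h2 : HasDerivAt (fun x : ℝ => 2 * (x - a) / (a + x))
            ((2 * (a + x) - 2 * (x - a)) / (a + x)^2) x := by
          have hn : HasDerivAt (fun x : ℝ => 2 * (x - a)) 2 x := by
            simpa using ((hasDerivAt_id x).sub_const a).const_mul 2
          have hdn : HasDerivAt (fun x : ℝ => a + x) 1 x := by
            simpa using (hasDerivAt_id x).const_add a
          exact (hn.div hdn hax.ne').congr_deriv (by ring)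
        have h3 : HasDerivAt (fun x : ℝ => (x - a)^3 * (a^3 + x^3) / (24 * a^3 * x^3))
            (((3 * (x - a)^2 * (a^3 + x^3) + (x - a)^3 * (3 * x^2)) * (24 * a^3 * x^3)
               - (x - a)^3 * (a^3 + x^3) * (24 * a^3 * (3 * x^2)))
              / (24 * a^3 * x^3)^2) x := by
          have hn1 : HasDerivAt (fun x : ℝ => (x - a)^3) (3 * (x - a)^2) x := by
            exact (((hasDerivAt_id x).sub_const a).pow 3).congr_deriv (by norm_num)
          have hn2 : HasDerivAt (fun x : ℝ => a^3 + x^3) (3 * x^2) x := by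
            simpa using ((hasDerivAt_id x).pow 3).const_add (a^3)
          have hn : HasDerivAt (fun x : ℝ => (x - a)^3 * (a^3 + x^3))
              (3 * (x - a)^2 * (a^3 + x^3) + (x - a)^3 * (3 * x^2)) x := hn1.mul hn2
          have hdm : HasDerivAt (fun x : ℝ => 24 * a^3 * x^3) (24 * a^3 * (3 * x^2)) x := by
            simpa using ((hasDerivAt_id x).pow 3).const_mul (24 * a^3)
          have hden : (24 * a^3 * x^3) ≠ 0 := by positivity
          exact hn.div hdm hden
        have := (h2.add h3).sub h1
        refine this.congr_deriv ?_
        field_simp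
        ring
      rw [hd.deriv]
      apply div_nonneg _ (by positivity)
      have e1 : 2 * a^2 * x^2 ≤ x^4 + a^4 := by nlinarith [sq_nonneg (x^2 - a^2)]
      have e2 : 4 * a * x ≤ (a + x)^2 := by nlinarith [sq_nonneg (x - a)]
      have e3 : (2 * a^2 * x^2) * (4 * a * x) ≤ (x^4 + a^4) * (a + x)^2 :=
        mul_le_mul e1 e2 (by positivity) (by positivity)
      have e4 : 0 ≤ (x^4 + a^4) * x * (a + x)^2 - 8 * a^3 * x^4 := by nlinarith [e3, hx0]
      exact mul_nonneg (sq_nonneg _) e4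
    apply monotoneOn_of_deriv_nonneg (convex_Ici a) _ _ hderiv
    · apply ContinuousOn.sub
      · apply ContinuousOn.add
        · apply ContinuousOn.div
          · fun_prop
          · fun_prop
          · intro x hx
            have h1 : a ≤ x := hx
            have : (0:ℝ) < a + x := by linarith
            exact this.ne'
        · apply ContinuousOn.div
          · fun_prop
          · fun_prop
          · intro x hx
            have h1 : a ≤ x := hx
            have hx0 : (0:ℝ) < x := lt_of_lt_of_le ha h1
            positivity
      · exact fun x hx => (Real.continuousAt_log
          (by have h1 : a ≤ x := hx
              have : (0:ℝ) < x := lt_of_lt_of_le ha h1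
              exact this.ne')).continuousWithinAt
    · intro x hx
      rw [interior_Ici] at hx
      have hxa : a < x := hx
      have hx0 : 0 < x := ha.trans hxa
      have hax : (a + x) ≠ 0 := by positivity
      have hden : (24 * a^3 * x^3) ≠ 0 := by positivity
      apply DifferentiableAt.differentiableWithinAt
      apply DifferentiableAt.sub
      · apply DifferentiableAt.add
        · exact ((differentiable_id.sub_const a).const_mul 2 |>.differentiableAt).div
            ((differentiable_id.const_add a).differentiableAt) hax
        · apply DifferentiableAt.div
          · exact (((differentiable_id.sub_const a).pow 3).mul
              (((differentiable_id.pow 3)).const_add (a^3))).differentiableAt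
          · exact ((differentiable_id.pow 3).const_mul (24 * a^3)).differentiableAt
          · exact hden
      · exact Real.differentiableAt_log hx0.ne'
  have h := key (self_mem_Ici) (mem_Ici.mpr hab) hab
  simp only [hf] at h
  have ha0 : 2 * (a - a) / (a + a) + (a - a)^3 * (a^3 + a^3) / (24 * a^3 * a^3) - Real.log a
      = - Real.log a := by simp
  rw [ha0] at h
  linarith

/-- Power mean step: weighted power mean with exponent `q ≥ 1` dominates the arithmetic mean. -/
lemma stmt_12_pow_mean (a b q w1 w2 : ℝ) (ha : 0 < a) (hb : 0 < b) (hq : 1 ≤ q)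
    (h1 : 0 ≤ w1) (h2 : 0 ≤ w2) (hs : w1 + w2 = 1) :
    w1 * a ^ (-3 : ℝ) + w2 * b ^ (-3 : ℝ)
      ≤ (w1 * a ^ (-3 * q) + w2 * b ^ (-3 * q)) ^ (1 / q) := by
  have hq0 : 0 < q := lt_of_lt_of_le one_pos hq
  have hp0 : (0:ℝ) ≤ 1 / q := by positivity
  have hp1 : 1 / q ≤ 1 := by rw [div_le_one hq0]; exact hq
  have hx : a ^ (-3 * q) ∈ Ici (0:ℝ) := mem_Ici.mpr (Real.rpow_nonneg ha.le _)
  have hy : b ^ (-3 * q) ∈ Ici (0:ℝ) := mem_Ici.mpr (Real.rpow_nonneg hb.le _)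
  have hcc := (Real.concaveOn_rpow hp0 hp1).2 hx hy h1 h2 hs
  simp only [smul_eq_mul] at hcc
  have ea : (a ^ (-3 * q)) ^ (1/q) = a ^ (-3 : ℝ) := by
    rw [← Real.rpow_mul ha.le]
    congr 1
    field_simp
  have eb : (b ^ (-3 * q)) ^ (1/q) = b ^ (-3 : ℝ) := by
    rw [← Real.rpow_mul hb.le]
    congr 1
    field_simp
  rw [ea, eb] at hcc
  exact hcc

/-- Proposition 14 of the paper (means version): logarithmic vs arithmetic mean. -/
theorem stmt_12 (a b q : ℝ) (ha : 0 < a) (hab : a < b) (hq : 1 ≤ q) :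
    |(Real.log b - Real.log a) / (b - a) - 2 / (a + b)|
      ≤ ((b - a) ^ 2 / 24) *
          (((3 * a ^ (-3 * q) + 5 * b ^ (-3 * q)) / 8) ^ (1 / q)
            + ((5 * a ^ (-3 * q) + 3 * b ^ (-3 * q)) / 8) ^ (1 / q)) := by
  have hb : 0 < b := ha.trans hab
  have hba : 0 < b - a := sub_pos.mpr hab
  have hs : 0 < a + b := by linarith
  have hlow := stmt_12_log_lower a b ha hab.le
  have hup := stmt_12_log_upper a b ha hab.le
  -- the quantity inside the absolute value is nonnegative
  have hnn : 0 ≤ (Real.log b - Real.log a) / (b - a) - 2 / (a + b) := by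
    rw [sub_nonneg, div_le_div_iff₀ hs hba]
    have := (div_le_iff₀ hs).mp hlow
    linarith
  rw [abs_of_nonneg hnn]
  -- convert the negative rpow to inverse cubes
  have ea : a ^ (-3 : ℝ) = 1 / a ^ 3 := by
    rw [show (-3 : ℝ) = ((-3 : ℤ) : ℝ) by norm_num, Real.rpow_intCast]
    simp [zpow_neg]
  have eb : b ^ (-3 : ℝ) = 1 / b ^ 3 := by
    rw [show (-3 : ℝ) = ((-3 : ℤ) : ℝ) by norm_num, Real.rpow_intCast]
    simp [zpow_neg]
  -- main analytic bound
  have key : (Real.log b - Real.log a) / (b - a) - 2 / (a + b)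
      ≤ (b - a) ^ 2 / 24 * (a ^ (-3 : ℝ) + b ^ (-3 : ℝ)) := by
    rw [ea, eb, sub_le_iff_le_add, div_le_iff₀ hba]
    have erhs : ((b - a) ^ 2 / 24 * (1 / a ^ 3 + 1 / b ^ 3) + 2 / (a + b)) * (b - a)
        = 2 * (b - a) / (a + b) + (b - a)^3 * (a^3 + b^3) / (24 * a^3 * b^3) := by
      field_simp
      ring
    rw [erhs]
    exact hup
  -- power mean comparison
  have pm1 := stmt_12_pow_mean a b q (3/8) (5/8) ha hb hq (by norm_num) (by norm_num)
    (by norm_num)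
  have pm2 := stmt_12_pow_mean a b q (5/8) (3/8) ha hb hq (by norm_num) (by norm_num)
    (by norm_num)
  have epm1 : (3/8) * a ^ (-3 * q) + (5/8) * b ^ (-3 * q)
      = (3 * a ^ (-3 * q) + 5 * b ^ (-3 * q)) / 8 := by ring
  have epm2 : (5/8) * a ^ (-3 * q) + (3/8) * b ^ (-3 * q)
      = (5 * a ^ (-3 * q) + 3 * b ^ (-3 * q)) / 8 := by ring
  rw [epm1] at pm1
  rw [epm2] at pm2
  have hsum : a ^ (-3 : ℝ) + b ^ (-3 : ℝ)
      ≤ ((3 * a ^ (-3 * q) + 5 * b ^ (-3 * q)) / 8) ^ (1 / q)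
        + ((5 * a ^ (-3 * q) + 3 * b ^ (-3 * q)) / 8) ^ (1 / q) := by
    linarith
  calc (Real.log b - Real.log a) / (b - a) - 2 / (a + b)
      ≤ (b - a) ^ 2 / 24 * (a ^ (-3 : ℝ) + b ^ (-3 : ℝ)) := key
    _ ≤ ((b - a) ^ 2 / 24) *
          (((3 * a ^ (-3 * q) + 5 * b ^ (-3 * q)) / 8) ^ (1 / q)
            + ((5 * a ^ (-3 * q) + 3 * b ^ (-3 * q)) / 8) ^ (1 / q)) := by
        apply mul_le_mul_of_nonneg_left hsum (by positivity)
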